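/- There exist constants C₁, C₂ > 0 such that for every element g of the Heisenberg group ℋ₃(ℤ) corresponding to the triple (x, y, z), one has C₁·(|x| + |y| + √|z|) ≤ d_A(g) ≤ C₂·(|x| + |y| + √|z|), where A = {s, p, q} and d_A(g) is the word length of g with respect to A. -/

import Mathlib

namespace CAG

/-- The convolution `w₁ ⊗ w₂` of two words, over the padded alphabet
`(Σ ∪ {⋄})²`, modelled as `Option α × Option α` where `none` is the padding symbol `⋄`. -/
def conv {α : Type*} : List α → List α → List (Option α × Option α)
  | [], [] => []
  | a :: as, [] => (some a, none) :: conv as []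
  | [], b :: bs => (none, some b) :: conv [] bs
  | a :: as, b :: bs => (some a, some b) :: conv as bs

/-- A binary relation on words is regular if the language of convolutions of its pairs
is a regular language. -/
def IsRegularRel {α : Type*} (R : Set (List α × List α)) : Prop :=
  Language.IsRegular {w | ∃ p ∈ R, w = conv p.1 p.2}

variable {G : Type*} [Group G]

/-- The alphabet `S = A ∪ A⁻¹` associated to a generating set `A ⊆ G`. -/
def Alph (A : Set G) : Type _ := {x : G // x ∈ A ∪ A⁻¹}

/-- The canonical evaluation map `π : S* → G`. -/
def eval (A : Set G) (w : List (Alph A)) : G := (w.map Subtype.val).prod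

/-- The word length `d_A(g)` of `g` with respect to the generating set `A`. -/
noncomputable def wordLength (A : Set G) (g : G) : ℕ :=
  sInf {n | ∃ w : List (Alph A), eval A w = g ∧ w.length = n}

/-- The distance `d_A(g₁, g₂)` in the Cayley graph of `G` with respect to `A`. -/
noncomputable def cayleyDist (A : Set G) (g₁ g₂ : G) : ℕ := wordLength A (g₁⁻¹ * g₂)

/-- `ψ : L → G` is a Cayley automatic representation of `G` (w.r.t. the
generating set `A`): `L ⊆ S*` is regular, `ψ` is a bijection from `L` onto `G`, and for every
`a ∈ A` the relation `R_a = {(ψ⁻¹(g), ψ⁻¹(g·a)) : g ∈ G}` is regular. -/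
def IsCayleyAutomaticRep (A : Set G) (L : Language (Alph A)) (ψ : List (Alph A) → G) : Prop :=
  Language.IsRegular L ∧ Set.BijOn ψ L Set.univ ∧
    ∀ a ∈ A, IsRegularRel {p : List (Alph A) × List (Alph A) |
      p.1 ∈ L ∧ p.2 ∈ L ∧ ψ p.2 = ψ p.1 * a}

/-- `G` is Cayley automatic with respect to the generating set `A`. -/
def IsCayleyAutomatic (A : Set G) : Prop :=
  ∃ (L : Language (Alph A)) (ψ : List (Alph A) → G), IsCayleyAutomaticRep A L ψ

/-- `G` is automatic (in the sense of Thurston) with respect to the generating set `A`: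
there is a regular language `L ⊆ S*` on which the canonical evaluation map `π` is a bijection
onto `G` and all the relations `R_a`, `a ∈ A`, are regular. -/
def IsAutomatic (A : Set G) : Prop :=
  ∃ L : Language (Alph A), IsCayleyAutomaticRep A L (eval A)

/-- The family `𝔉` of non-decreasing, non-negative real valued functions defined on a
final segment `[Q, ∞)` of `ℕ` (values below `Q` are irrelevant junk values). -/
structure FFun where
  Q : ℕ
  toFun : ℕ → ℝ
  nonneg : ∀ n, Q ≤ n → 0 ≤ toFun n
  mono : ∀ m n, Q ≤ m → m ≤ n → toFun m ≤ toFun n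

/-- `h ⪯ f` : there are positive integers `K, M, N`, with `[N,∞)` contained in the domains of
`h` and `f`, such that `h(n) ≤ K·f(M·n)` for all `n ≥ N`. -/
def FFun.Preceq (h f : FFun) : Prop :=
  ∃ K M N : ℕ, 0 < K ∧ 0 < M ∧ 0 < N ∧ h.Q ≤ N ∧ f.Q ≤ N ∧
    ∀ n, N ≤ n → h.toFun n ≤ K * f.toFun (M * n)

/-- `h ≍ f` iff `h ⪯ f` and `f ⪯ h`. -/
def FFun.Equiv (h f : FFun) : Prop := h.Preceq f ∧ f.Preceq h

/-- `h ≺ f` iff `h ⪯ f` and not `h ≍ f`. -/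
def FFun.Prec (h f : FFun) : Prop := h.Preceq f ∧ ¬ h.Equiv f

/-- `G ∈ ℬ_f` with respect to the generating set `A`: there is a Cayley automatic
representation `ψ : L → G` such that the function
`h(n) = max{d_A(π(w), ψ(w)) : w ∈ L, |w| ≤ n}` satisfies `h ⪯ f`
(stated equivalently: for some positive `K, M, N` with `N ≥ Q_f`, every `w ∈ L` with `|w| ≤ n`
and `n ≥ N` satisfies `d_A(π(w), ψ(w)) ≤ K·f(M·n)`). -/
def InB (A : Set G) (f : FFun) : Prop :=
  ∃ (L : Language (Alph A)) (ψ : List (Alph A) → G),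
    IsCayleyAutomaticRep A L ψ ∧
    ∃ K M N : ℕ, 0 < K ∧ 0 < M ∧ 0 < N ∧ f.Q ≤ N ∧
      ∀ n, N ≤ n → ∀ w ∈ L, w.length ≤ n →
        (cayleyDist A (eval A w) (ψ w) : ℝ) ≤ K * f.toFun (M * n)

/-- The identity function `𝔦(n) = n` as an element of `𝔉`. -/
def identF : FFun where
  Q := 1
  toFun n := n
  nonneg n _ := by positivity
  mono m n _ h := by simpa using (Nat.cast_le (α := ℝ)).mpr h

/-- The exponential function `𝔢(n) = exp n` as an element of `𝔉`. -/
noncomputable def expF : FFun where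
  Q := 1
  toFun n := Real.exp n
  nonneg n _ := (Real.exp_pos n).le
  mono m n _ h := Real.exp_le_exp.mpr (by exact_mod_cast h)

end CAG
namespace CAG

/-- The Heisenberg group `ℋ₃(ℤ)` of `3×3` upper unitriangular integer matrices, an element
being identified with the triple `(x, y, z)` of its upper-right entries, with multiplication
`(x,y,z)·(x',y',z') = (x+x', y+y', z+z'+x·y')`. -/
@[ext] structure Heis where
  x : ℤ
  y : ℤ
  z : ℤ

instance : Mul Heis := ⟨fun g h => ⟨g.x + h.x, g.y + h.y, g.z + h.z + g.x * h.y⟩⟩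
instance : One Heis := ⟨⟨0, 0, 0⟩⟩
instance : Inv Heis := ⟨fun g => ⟨-g.x, -g.y, -g.z + g.x * g.y⟩⟩

lemma Heis.mul_def (g h : Heis) :
    g * h = ⟨g.x + h.x, g.y + h.y, g.z + h.z + g.x * h.y⟩ := rfl
lemma Heis.one_def : (1 : Heis) = ⟨0, 0, 0⟩ := rfl
lemma Heis.inv_def (g : Heis) : g⁻¹ = ⟨-g.x, -g.y, -g.z + g.x * g.y⟩ := rfl

instance : Group Heis where
  mul_assoc a b c := by
    simp only [Heis.mul_def]
    ext <;> dsimp <;> ring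
  one_mul a := by simp only [Heis.mul_def, Heis.one_def]; ext <;> dsimp <;> ring
  mul_one a := by simp only [Heis.mul_def, Heis.one_def]; ext <;> dsimp <;> ring
  inv_mul_cancel a := by
    simp only [Heis.mul_def, Heis.inv_def, Heis.one_def]
    ext <;> dsimp <;> ring

/-- The generator `s = (1,0,0)` of `ℋ₃(ℤ)`. -/
def Heis.s : Heis := ⟨1, 0, 0⟩
/-- The generator `p = (0,1,0)` of `ℋ₃(ℤ)`. -/
def Heis.p : Heis := ⟨0, 1, 0⟩
/-- The generator `q = (0,0,1)` of `ℋ₃(ℤ)`. -/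
def Heis.q : Heis := ⟨0, 0, 1⟩

end CAG

namespace CAG

/-- The generating set of the Heisenberg group. -/
abbrev HGen : Set Heis := {Heis.s, Heis.p, Heis.q}

lemma mem_of_eq_gen (a : Heis) (h : a = Heis.s ∨ a = Heis.p ∨ a = Heis.q) :
    a ∈ HGen ∪ HGen⁻¹ := Or.inl (by rcases h with h|h|h <;> simp [h, HGen])

lemma mem_of_inv_eq_gen (a : Heis) (h : a⁻¹ = Heis.s ∨ a⁻¹ = Heis.p ∨ a⁻¹ = Heis.q) :
    a ∈ HGen ∪ HGen⁻¹ := Or.inr (by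
  rw [Set.mem_inv]; rcases h with h|h|h <;> simp [h, HGen])

def lS : Alph HGen := ⟨⟨1,0,0⟩, mem_of_eq_gen _ (Or.inl rfl)⟩
def lP : Alph HGen := ⟨⟨0,1,0⟩, mem_of_eq_gen _ (Or.inr (Or.inl rfl))⟩
def lQ : Alph HGen := ⟨⟨0,0,1⟩, mem_of_eq_gen _ (Or.inr (Or.inr rfl))⟩
def lS' : Alph HGen := ⟨⟨-1,0,0⟩, mem_of_inv_eq_gen _ (Or.inl (by
  rw [Heis.inv_def]; ext <;> norm_num [Heis.s]))⟩
def lP' : Alph HGen := ⟨⟨0,-1,0⟩, mem_of_inv_eq_gen _ (Or.inr (Or.inl (by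
  rw [Heis.inv_def]; ext <;> norm_num [Heis.p])))⟩
def lQ' : Alph HGen := ⟨⟨0,0,-1⟩, mem_of_inv_eq_gen _ (Or.inr (Or.inr (by
  rw [Heis.inv_def]; ext <;> norm_num [Heis.q])))⟩

lemma eval_append (w₁ w₂ : List (Alph HGen)) :
    eval HGen (w₁ ++ w₂) = eval HGen w₁ * eval HGen w₂ := by
  unfold eval; exact (congrArg List.prod (List.map_append ..)).trans List.prod_append

lemma eval_replicate (a : Alph HGen) (n : ℕ) :
    eval HGen (List.replicate n a) = a.1 ^ n := by
  unfold eval; exact (congrArg List.prod List.map_replicate).trans (List.prod_replicate ..)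

lemma heis_pow (u v w : ℤ) (huv : u * v = 0) (n : ℕ) :
    (⟨u, v, w⟩ : Heis) ^ n = ⟨n * u, n * v, n * w⟩ := by
  induction n with
  | zero => rw [pow_zero, Heis.one_def]; ext <;> simp
  | succ n ih =>
      rw [pow_succ, ih, Heis.mul_def]
      ext <;> push_cast <;> nlinarith [huv]

/-- Word representing a power of a generator. -/
def wPow (a a' : Alph HGen) (k : ℤ) : List (Alph HGen) :=
  if 0 ≤ k then List.replicate k.toNat a else List.replicate (-k).toNat a'

lemma length_wPow (a a' : Alph HGen) (k : ℤ) : (wPow a a' k).length = k.natAbs := by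
  unfold wPow; split <;> simp <;> omega

lemma eval_wPow (u v w : ℤ) (huv : u * v = 0) (a a' : Alph HGen)
    (ha : a.1 = ⟨u, v, w⟩) (ha' : a'.1 = ⟨-u, -v, -w⟩) (k : ℤ) :
    eval HGen (wPow a a' k) = ⟨k * u, k * v, k * w⟩ := by
  unfold wPow
  split_ifs with h
  · rw [eval_replicate, ha, heis_pow u v w huv, Int.toNat_of_nonneg h]
  · rw [eval_replicate, ha', heis_pow (-u) (-v) (-w) (by nlinarith [huv]),
      Int.toNat_of_nonneg (show (0:ℤ) ≤ -k by omega)]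
    ext <;> dsimp only <;> ring

def wS (k : ℤ) : List (Alph HGen) := wPow lS lS' k
def wP (k : ℤ) : List (Alph HGen) := wPow lP lP' k
def wQ (k : ℤ) : List (Alph HGen) := wPow lQ lQ' k

lemma eval_wS (k : ℤ) : eval HGen (wS k) = ⟨k, 0, 0⟩ := by
  have := eval_wPow 1 0 0 (by ring) lS lS' (by ext <;> rfl) (by ext <;> rfl) k
  simpa [wS] using this

lemma eval_wP (k : ℤ) : eval HGen (wP k) = ⟨0, k, 0⟩ := by
  have := eval_wPow 0 1 0 (by ring) lP lP' (by ext <;> rfl) (by ext <;> rfl) k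
  simpa [wP] using this

lemma eval_wQ (k : ℤ) : eval HGen (wQ k) = ⟨0, 0, k⟩ := by
  have := eval_wPow 0 0 1 (by ring) lQ lQ' (by ext <;> rfl) (by ext <;> rfl) k
  simpa [wQ] using this

/-- Word for `q^z` of length `≤ 6·√|z|`. -/
def wQQ (z : ℤ) : List (Alph HGen) :=
  let k : ℤ := Nat.sqrt z.natAbs
  let r : ℤ := (z.natAbs : ℤ) - k * k
  if 0 ≤ z then wS k ++ wP k ++ wS (-k) ++ wP (-k) ++ wQ r
  else wQ (-r) ++ wP k ++ wS k ++ wP (-k) ++ wS (-k)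

lemma q_word_pos (k r : ℤ) :
    eval HGen (wS k ++ wP k ++ wS (-k) ++ wP (-k) ++ wQ r) = ⟨0, 0, k * k + r⟩ := by
  simp only [eval_append, eval_wS, eval_wP, eval_wQ, Heis.mul_def]
  ext <;> dsimp <;> ring

lemma q_word_neg (k r : ℤ) :
    eval HGen (wQ (-r) ++ wP k ++ wS k ++ wP (-k) ++ wS (-k)) = ⟨0, 0, -(k * k + r)⟩ := by
  simp only [eval_append, eval_wS, eval_wP, eval_wQ, Heis.mul_def]
  ext <;> dsimp <;> ring

lemma eval_wQQ (z : ℤ) : eval HGen (wQQ z) = ⟨0, 0, z⟩ := by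
  unfold wQQ
  split_ifs with h
  · rw [q_word_pos]; ext <;> dsimp <;> omega
  · rw [q_word_neg]; ext <;> dsimp <;> omega

lemma length_wQQ (z : ℤ) :
    (wQQ z).length ≤ 6 * Nat.sqrt z.natAbs := by
  unfold wQQ
  have h1 : z.natAbs < (Nat.sqrt z.natAbs + 1) * (Nat.sqrt z.natAbs + 1) := by
    have := Nat.lt_succ_sqrt' z.natAbs
    rwa [Nat.succ_eq_add_one, pow_two] at this
  have h2 : Nat.sqrt z.natAbs * Nat.sqrt z.natAbs ≤ z.natAbs := by
    have := Nat.sqrt_le' z.natAbs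
    rwa [pow_two] at this
  rw [show (Nat.sqrt z.natAbs + 1) * (Nat.sqrt z.natAbs + 1)
      = Nat.sqrt z.natAbs * Nat.sqrt z.natAbs + 2 * Nat.sqrt z.natAbs + 1 by ring] at h1
  have h2' : (Nat.sqrt z.natAbs : ℤ) * (Nat.sqrt z.natAbs : ℤ) ≤ (z.natAbs : ℤ) := by
    exact_mod_cast h2
  have h1' : (z.natAbs : ℤ) < (Nat.sqrt z.natAbs : ℤ) * (Nat.sqrt z.natAbs : ℤ)
      + 2 * (Nat.sqrt z.natAbs : ℤ) + 1 := by exact_mod_cast h1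
  split_ifs <;>
    simp only [List.length_append, wS, wP, wQ, length_wPow] <;> omega

lemma eval_word (g : Heis) :
    eval HGen (wP g.y ++ wQQ g.z ++ wS g.x) = g := by
  rw [eval_append, eval_append, eval_wP, eval_wQQ, eval_wS]
  simp only [Heis.mul_def]
  ext <;> dsimp <;> ring

lemma letter_bound' (a : Heis) (ha : a ∈ HGen ∪ HGen⁻¹) :
    |a.x| ≤ 1 ∧ |a.y| ≤ 1 ∧ |a.z| ≤ 1 := by
  rcases ha with ha | ha
  · simp only [HGen, Set.mem_insert_iff, Set.mem_singleton_iff] at ha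
    rcases ha with h|h|h <;> subst h <;> simp [Heis.s, Heis.p, Heis.q]
  · rw [Set.mem_inv] at ha
    simp only [HGen, Set.mem_insert_iff, Set.mem_singleton_iff] at ha
    have key : ∀ b : Heis, a⁻¹ = b → a = b⁻¹ := by intro b hb; rw [← hb, inv_inv]
    rcases ha with h|h|h <;> rw [key _ h, Heis.inv_def] <;>
      simp [Heis.s, Heis.p, Heis.q]

lemma letter_bound (a : Alph HGen) :
    |a.1.x| ≤ 1 ∧ |a.1.y| ≤ 1 ∧ |a.1.z| ≤ 1 :=
  letter_bound' a.1 a.2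

lemma eval_bounds (w : List (Alph HGen)) :
    |(eval HGen w).x| ≤ (w.length : ℤ) ∧ |(eval HGen w).y| ≤ (w.length : ℤ) ∧
      |(eval HGen w).z| ≤ (w.length : ℤ) ^ 2 := by
  induction w with
  | nil => simp [eval, Heis.one_def]; exact ⟨rfl, rfl, rfl⟩
  | cons a w ih =>
      obtain ⟨h1, h2, h3⟩ := ih
      obtain ⟨a1, a2, a3⟩ := letter_bound a
      have he : eval HGen (a :: w) = a.1 * eval HGen w := by
        unfold eval; exact (congrArg List.prod (List.map_cons ..)).trans List.prod_cons
      rw [he, Heis.mul_def, List.length_cons]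
      push_cast
      set h := eval HGen w
      refine ⟨?_, ?_, ?_⟩
      · calc |a.1.x + h.x| ≤ |a.1.x| + |h.x| := abs_add_le _ _
          _ ≤ (w.length : ℤ) + 1 := by linarith
      · calc |a.1.y + h.y| ≤ |a.1.y| + |h.y| := abs_add_le _ _
          _ ≤ (w.length : ℤ) + 1 := by linarith
      · have : |a.1.z + h.z + a.1.x * h.y| ≤
            |a.1.z| + |h.z| + |a.1.x| * |h.y| := by
          calc |a.1.z + h.z + a.1.x * h.y|
              ≤ |a.1.z + h.z| + |a.1.x * h.y| := abs_add_le _ _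
            _ ≤ |a.1.z| + |h.z| + |a.1.x| * |h.y| := by
                rw [abs_mul]; linarith [abs_add_le a.1.z h.z]
        nlinarith [abs_nonneg h.y, abs_nonneg a.1.x]

end CAG

open CAG in
/-- Metric estimates for the Heisenberg group `ℋ₃(ℤ)`: there are constants `C₁, C₂ > 0` such
that for every element `g` corresponding to the triple `(x,y,z)`,
`C₁·(|x| + |y| + √|z|) ≤ d_A(g) ≤ C₂·(|x| + |y| + √|z|)` where `A = {s, p, q}`. -/
theorem heisenberg_metric_estimates :
    ∃ C₁ C₂ : ℝ, 0 < C₁ ∧ 0 < C₂ ∧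
      ∀ g : Heis,
        C₁ * (|(g.x : ℝ)| + |(g.y : ℝ)| + Real.sqrt |(g.z : ℝ)|) ≤
            (wordLength ({Heis.s, Heis.p, Heis.q} : Set Heis) g : ℝ) ∧
          (wordLength ({Heis.s, Heis.p, Heis.q} : Set Heis) g : ℝ) ≤
            C₂ * (|(g.x : ℝ)| + |(g.y : ℝ)| + Real.sqrt |(g.z : ℝ)|) := by
  refine ⟨1/3, 6, by norm_num, by norm_num, fun g => ?_⟩
  have hne : {n | ∃ w : List (Alph HGen), eval HGen w = g ∧ w.length = n}.Nonempty :=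
    ⟨_, wP g.y ++ wQQ g.z ++ wS g.x, eval_word g, rfl⟩
  have hub : wordLength HGen g ≤ (wP g.y ++ wQQ g.z ++ wS g.x).length :=
    Nat.sInf_le ⟨_, eval_word g, rfl⟩
  have hd : wordLength HGen g ∈
      {n | ∃ w : List (Alph HGen), eval HGen w = g ∧ w.length = n} := Nat.sInf_mem hne
  obtain ⟨w, hw, hlen⟩ := hd
  obtain ⟨b1, b2, b3⟩ := eval_bounds w
  rw [hw, hlen] at b1 b2 b3
  set d : ℕ := wordLength HGen g with hdd
  have hxr : |(g.x : ℝ)| ≤ (d : ℝ) := by exact_mod_cast b1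
  have hyr : |(g.y : ℝ)| ≤ (d : ℝ) := by exact_mod_cast b2
  have hzr : |(g.z : ℝ)| ≤ (d : ℝ) ^ 2 := by exact_mod_cast b3
  have hsq : Real.sqrt |(g.z : ℝ)| ≤ (d : ℝ) := by
    calc Real.sqrt |(g.z : ℝ)| ≤ Real.sqrt ((d : ℝ) ^ 2) := Real.sqrt_le_sqrt hzr
      _ = (d : ℝ) := by rw [Real.sqrt_sq (Nat.cast_nonneg d)]
  constructor
  · linarith
  · -- upper bound
    have hnat : (wP g.y ++ wQQ g.z ++ wS g.x).length ≤
        g.y.natAbs + 6 * Nat.sqrt g.z.natAbs + g.x.natAbs := by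
      have := length_wQQ g.z
      simp only [List.length_append, wP, wS, length_wPow]
      omega
    have habs : ((g.z.natAbs : ℕ) : ℝ) = |(g.z : ℝ)| := by
      push_cast [Nat.cast_natAbs]; ring
    have hk : ((Nat.sqrt g.z.natAbs : ℕ) : ℝ) ≤ Real.sqrt |(g.z : ℝ)| := by
      rw [← habs]
      exact Real.nat_sqrt_le_real_sqrt
    have hxa : ((g.x.natAbs : ℕ) : ℝ) = |(g.x : ℝ)| := by push_cast [Nat.cast_natAbs]; ring
    have hya : ((g.y.natAbs : ℕ) : ℝ) = |(g.y : ℝ)| := by push_cast [Nat.cast_natAbs]; ring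
    have h1 : (d : ℝ) ≤ ((g.y.natAbs + 6 * Nat.sqrt g.z.natAbs + g.x.natAbs : ℕ) : ℝ) := by
      exact_mod_cast le_trans hub hnat
    push_cast at h1
    rw [hxa, hya] at h1
    have hx0 : 0 ≤ |(g.x : ℝ)| := abs_nonneg _
    have hy0 : 0 ≤ |(g.y : ℝ)| := abs_nonneg _
    linarith
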